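/- Let 0 < μ ≤ L, Q := L/μ ≥ 1, σ ∈ [0, 1), integer n ≥ 1, and 0 < α ≤ (1−σ²)²/(187QL). Then I₃ − J_α is invertible and ‖(I₃ − J_α)^{−1} H_α‖_∞^q ≤ 0.66, where q := (1, 1, 1453/(1−σ²)²). -/

import Mathlib

set_option maxHeartbeats 1000000


/-- The system matrix `J_α` governing GT-SVRG. -/
noncomputable def GTSVRGMatrixJ (μ L σ α : ℝ) : Matrix (Fin 3) (Fin 3) ℝ :=
  !![(1 + σ ^ 2) / 2, 0, 2 * α ^ 2 * L ^ 2 / (1 - σ ^ 2);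
     2 * L ^ 2 * α / μ, 1 - μ * α / 2, 0;
     120 / (1 - σ ^ 2), 87 / (1 - σ ^ 2), (3 + σ ^ 2) / 4]

/-- The input matrix `H_α` governing GT-SVRG. -/
noncomputable def GTSVRGMatrixH (L σ α : ℝ) (n : ℕ) : Matrix (Fin 3) (Fin 3) ℝ :=
  !![0, 0, 0;
     4 * L ^ 2 * α ^ 2 / n, 4 * L ^ 2 * α ^ 2 / n, 0;
     38 / (1 - σ ^ 2), 38 / (1 - σ ^ 2), 0]

/-- The weighted infinity matrix norm `‖A‖_∞^w = max_i (∑_j |A i j| * w j) / w i`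
induced by a positive weight vector `w`. -/
noncomputable def wInfMatNorm {d : ℕ} (w : Fin d → ℝ) (A : Matrix (Fin d) (Fin d) ℝ) : ℝ :=
  ⨆ i, (∑ j, |A i j| * w j) / w i

/-- For `0 < α ≤ (1−σ²)²/(187QL)`, the matrix `I₃ − J_α` is
invertible and `‖(I₃ − J_α)⁻¹ H_α‖_∞^q ≤ 0.66` with `q = (1, 1, 1453/(1−σ²)²)`. -/
theorem gtsvrg_JH_norm_bound (μ L σ α Q : ℝ) (n : ℕ)
    (hμ : 0 < μ) (hμL : μ ≤ L) (hQ : Q = L / μ) (hQ1 : 1 ≤ Q)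
    (hσ0 : 0 ≤ σ) (hσ1 : σ < 1) (hn : 1 ≤ n)
    (hα0 : 0 < α) (hα : α ≤ (1 - σ ^ 2) ^ 2 / (187 * Q * L)) :
    IsUnit (1 - GTSVRGMatrixJ μ L σ α) ∧
      wInfMatNorm ![1, 1, 1453 / (1 - σ ^ 2) ^ 2]
          ((1 - GTSVRGMatrixJ μ L σ α)⁻¹ * GTSVRGMatrixH L σ α n) ≤ 0.66 := by
  have hL : 0 < L := lt_of_lt_of_le hμ hμL
  have hs0 : 0 < 1 - σ ^ 2 := by nlinarith
  have hs1 : 1 - σ ^ 2 ≤ 1 := by nlinarith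
  have hs2 : (1 - σ ^ 2) ^ 2 ≤ 1 := by nlinarith
  have hn1 : (1:ℝ) ≤ (n:ℝ) := by exact_mod_cast hn
  have hn0 : (0:ℝ) < (n:ℝ) := by linarith
  -- the key bound on α
  have kA : 187 * (α * L ^ 2) ≤ (1 - σ ^ 2) ^ 2 * μ := by
    rw [hQ] at hα
    have h1 : 0 < 187 * (L / μ) * L := by positivity
    rw [le_div_iff₀ h1] at hα
    have := mul_le_mul_of_nonneg_right hα hμ.le
    field_simp at this
    nlinarith [this]
  have kB : 187 * (α * μ) ≤ (1 - σ ^ 2) ^ 2 := by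
    have h1 : 187 * (α * μ) * μ ≤ 187 * (α * L ^ 2) := by
      nlinarith [mul_le_mul_of_nonneg_left (mul_self_le_mul_self hμ.le hμL) hα0.le]
    have h2 : 187 * (α * μ) * μ ≤ (1 - σ ^ 2) ^ 2 * μ := le_trans h1 kA
    exact le_of_mul_le_mul_right h2 hμ
  have k1 : 34969 * (α ^ 2 * L ^ 4) ≤ (1 - σ ^ 2) ^ 4 * μ ^ 2 := by
    nlinarith [mul_le_mul kA kA (by positivity : (0:ℝ) ≤ 187 * (α * L ^ 2)) (by positivity : (0:ℝ) ≤ (1 - σ ^ 2) ^ 2 * μ)]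
  have k2 : 34969 * (α ^ 2 * L ^ 2 * μ) ≤ (1 - σ ^ 2) ^ 4 * μ := by
    nlinarith [mul_le_mul kA kB (by positivity : (0:ℝ) ≤ 187 * (α * μ)) (by positivity : (0:ℝ) ≤ (1 - σ ^ 2) ^ 2 * μ)]
  -- monomial bounds
  have m1 : 34969 * (α ^ 3 * L ^ 4) ≤ (1 - σ ^ 2) ^ 4 * μ ^ 2 * α := by
    nlinarith [mul_le_mul_of_nonneg_right k1 hα0.le]
  have m2 : 34969 * (α ^ 3 * L ^ 2 * μ ^ 2) ≤ (1 - σ ^ 2) ^ 4 * μ ^ 2 * α := by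
    nlinarith [mul_le_mul_of_nonneg_right k2 (by positivity : (0:ℝ) ≤ α * μ)]
  have m3 : 6539203 * (μ * α ^ 4 * L ^ 4) ≤ (1 - σ ^ 2) ^ 4 * μ ^ 2 * α := by
    have p1 : 34969 * (α ^ 2 * L ^ 4) * (187 * (α * μ)) ≤ ((1 - σ ^ 2) ^ 4 * μ ^ 2) * ((1 - σ ^ 2) ^ 2) :=
      mul_le_mul k1 kB (by positivity) (by positivity)
    have p2 := mul_le_mul_of_nonneg_right p1 hα0.le
    linarith [p2, mul_le_mul_of_nonneg_right hs2 (by positivity : (0:ℝ) ≤ (1 - σ ^ 2) ^ 4 * μ ^ 2 * α)]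
  have m5 : 187 * (μ * L ^ 2 * α ^ 2 * (1 - σ ^ 2) ^ 4) ≤ (1 - σ ^ 2) ^ 4 * μ ^ 2 * α := by
    have p1 := mul_le_mul_of_nonneg_right kA (by positivity : (0:ℝ) ≤ μ * α * (1 - σ ^ 2) ^ 4)
    linarith [p1, mul_le_mul_of_nonneg_right hs2 (by positivity : (0:ℝ) ≤ (1 - σ ^ 2) ^ 4 * μ ^ 2 * α)]
  have hf : 0 ≤ ((n:ℝ) - 1) * ((1 - σ ^ 2) ^ 4 * μ ^ 2 * α) :=
    mul_nonneg (by linarith) (by positivity)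
  -- abbreviations
  set D : ℝ := (n:ℝ) * μ ^ 2 * α * (1 - σ ^ 2) ^ 4 - 5568 * n * α ^ 3 * L ^ 4
      - 1920 * n * α ^ 3 * L ^ 2 * μ ^ 2 with hD_def
  have nm1 := mul_le_mul_of_nonneg_left m1 hn0.le
  have nm2 := mul_le_mul_of_nonneg_left m2 hn0.le
  have hDpos : 0 < D := by
    rw [hD_def]
    linarith [nm1, nm2, mul_pos (mul_pos hn0 hα0) (by positivity : (0:ℝ) < (1 - σ ^ 2) ^ 4 * μ ^ 2)]
  -- numerators
  set N1 : ℝ := 11136 * μ * α ^ 4 * L ^ 4 + 608 * n * μ ^ 2 * α ^ 3 * L ^ 2 with hN1_def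
  set N2 : ℝ := 8 * μ * L ^ 2 * α ^ 2 * (1 - σ ^ 2) ^ 4 - 15360 * μ * α ^ 4 * L ^ 4
      + 2432 * n * α ^ 3 * L ^ 4 with hN2_def
  set N3 : ℝ := 2784 * μ * L ^ 2 * α ^ 2 * (1 - σ ^ 2) ^ 2
      + 152 * n * μ ^ 2 * α * (1 - σ ^ 2) ^ 2 with hN3_def
  have hN1pos : 0 ≤ N1 := by positivity
  have hN2pos : 0 ≤ N2 := by
    rw [hN2_def]
    have p1 := mul_le_mul_of_nonneg_right kB (by positivity : (0:ℝ) ≤ α ^ 3 * L ^ 4)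
    have p2 := mul_le_mul_of_nonneg_right hs2 (by positivity : (0:ℝ) ≤ α ^ 3 * L ^ 4)
    have p3 : 0 ≤ ((n:ℝ) - 1) * (α ^ 3 * L ^ 4) := mul_nonneg (by linarith) (by positivity)
    linarith [p1, p2, p3, (by positivity : (0:ℝ) ≤ 8 * μ * L ^ 2 * α ^ 2 * (1 - σ ^ 2) ^ 4),
      (by positivity : (0:ℝ) ≤ α ^ 3 * L ^ 4)]
  have hN3pos : 0 ≤ N3 := by positivity
  have hDne : ((n:ℝ) * μ ^ 2 * α * (1 - σ ^ 2) ^ 4 - 5568 * n * α ^ 3 * L ^ 4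
      - 1920 * n * α ^ 3 * L ^ 2 * μ ^ 2) ≠ 0 := by rw [← hD_def]; exact hDpos.ne'
  -- explicit form of 1 - J
  have hM : (1 - GTSVRGMatrixJ μ L σ α) =
      !![(1 - σ ^ 2) / 2, 0, -(2 * α ^ 2 * L ^ 2 / (1 - σ ^ 2));
         -(2 * L ^ 2 * α / μ), μ * α / 2, 0;
         -(120 / (1 - σ ^ 2)), -(87 / (1 - σ ^ 2)), (1 - σ ^ 2) / 4] := by
    ext i j
    fin_cases i <;> fin_cases j <;> simp [GTSVRGMatrixJ, Matrix.one_apply] <;> ring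
  -- determinant
  have hdet : (1 - GTSVRGMatrixJ μ L σ α).det
      = (μ ^ 2 * α * (1 - σ ^ 2) ^ 4 - 5568 * α ^ 3 * L ^ 4 - 1920 * α ^ 3 * L ^ 2 * μ ^ 2)
        / (16 * μ * (1 - σ ^ 2) ^ 2) := by
    rw [hM, Matrix.det_fin_three]
    simp
    field_simp
    ring
  have hdetpos : 0 < (1 - GTSVRGMatrixJ μ L σ α).det := by
    rw [hdet]
    apply div_pos _ (by positivity)
    nlinarith [m1, m2, mul_pos hα0 (by positivity : (0:ℝ) < (1 - σ ^ 2) ^ 4 * μ ^ 2)]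
  have hunit : IsUnit (1 - GTSVRGMatrixJ μ L σ α) := by
    rw [Matrix.isUnit_iff_isUnit_det]
    exact (isUnit_iff_ne_zero).mpr hdetpos.ne'
  refine ⟨hunit, ?_⟩
  have hMX : (1 - GTSVRGMatrixJ μ L σ α) *
      (!![N1 / D, N1 / D, 0; N2 / D, N2 / D, 0; N3 / D, N3 / D, 0]) = GTSVRGMatrixH L σ α n := by
    rw [hM, hN1_def, hN2_def, hN3_def, hD_def]
    ext i j
    fin_cases i <;> fin_cases j <;>
      (try simp [GTSVRGMatrixH, Matrix.mul_apply, Fin.sum_univ_three]) <;>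
      (try field_simp) <;> (rw [div_eq_iff] <;> [ring; (intro h; apply hDne; linear_combination ((n:ℝ) * α) * h)])
  have hXeq : (1 - GTSVRGMatrixJ μ L σ α)⁻¹ * GTSVRGMatrixH L σ α n
      = !![N1 / D, N1 / D, 0; N2 / D, N2 / D, 0; N3 / D, N3 / D, 0] := by
    rw [← hMX, ← Matrix.mul_assoc,
      Matrix.nonsing_inv_mul _ ((isUnit_iff_ne_zero).mpr hdetpos.ne'), Matrix.one_mul]
  rw [hXeq, wInfMatNorm]
  apply ciSup_le
  intro i
  fin_cases i <;>
    simp [Fin.sum_univ_three, abs_div, abs_of_nonneg hN1pos, abs_of_nonneg hN2pos,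
      abs_of_nonneg hN3pos, abs_of_nonneg hDpos.le]
  · rw [← add_div, div_le_iff₀ hDpos, hN1_def, hD_def]
    linarith [m3, nm1, nm2, hf]
  · rw [← add_div, div_le_iff₀ hDpos, hN2_def, hD_def]
    linarith [m5, nm1, nm2, hf, (by positivity : (0:ℝ) ≤ μ * α ^ 4 * L ^ 4)]
  · have hw : (0:ℝ) < 1453 / (1 - σ ^ 2) ^ 2 := by positivity
    rw [div_le_iff₀ hw, ← add_div, div_le_iff₀ hDpos,
      show (0.66:ℝ) * (1453 / (1 - σ ^ 2) ^ 2) * D = 0.66 * 1453 * D / (1 - σ ^ 2) ^ 2 from by ring,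
      le_div_iff₀ (by positivity : (0:ℝ) < (1 - σ ^ 2) ^ 2), hN3_def, hD_def]
    linarith [m5, nm1, nm2, hf]
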